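/- arXiv:2002.06281 — 4 statements merged into one kernel-verified Lean document; each statement's English description precedes it below -/
import Mathlib

section
/- (Inf-morphism property) Let J be a finite nonempty index set, let c_j for j ∈ J be value conditions, and let c(t, x) = min_{j ∈ J} c_j(t, x). Then for every (t, x) ∈ ℝ × ℝ, M_c(t, x) = min_{j ∈ J} M_{c_j}(t, x). -/
lemma EReal.iInf_add_coe {J : Type} [Nonempty J] (f : J → EReal) (a : ℝ) :
    (⨅ j, f j) + (a : EReal) = ⨅ j, f j + (a : EReal) := by
  refine le_antisymm (le_iInf fun j => add_le_add (iInf_le _ j) le_rfl) ?_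
  refine (EReal.sub_le_iff_le_add (.inl (EReal.coe_ne_bot a))
    (.inl (EReal.coe_ne_top a))).1 ?_
  exact le_iInf fun j => (EReal.sub_le_iff_le_add (.inl (EReal.coe_ne_bot a))
    (.inl (EReal.coe_ne_top a))).2 (iInf_le _ j)

/-- The Lax–Hopf solution associated with a value condition `c : ℝ × ℝ → ℝ ∪ {+∞}`
(modeled with values in `EReal`), velocity set `U` and cost `φ`:
`M_c(t, x) = inf { c(t − T, x + T·u) + T·φ(u) : T ≥ 0, u ∈ U }`. -/
noncomputable def laxHopf (U : Set ℝ) (φ : ℝ → ℝ) (c : ℝ × ℝ → EReal) (t x : ℝ) : EReal :=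
  ⨅ (T : ℝ) (_ : 0 ≤ T) (u : ℝ) (_ : u ∈ U), c (t - T, x + T * u) + ((T * φ u : ℝ) : EReal)

/-- **Inf-morphism property**: if the value condition `c` is the pointwise minimum of
finitely many value conditions `c_j`, then the Lax–Hopf solution of `c` is the pointwise
minimum of the Lax–Hopf solutions of the `c_j`. -/
theorem laxHopf_infMorphism (U : Set ℝ) (hU : U.Nonempty) (φ : ℝ → ℝ)
    (J : Type) [Fintype J] [Nonempty J]
    (c : J → ℝ × ℝ → EReal) (hc : ∀ (j : J) (p : ℝ × ℝ), c j p ≠ ⊥) :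
    ∀ t x : ℝ, laxHopf U φ (fun p => ⨅ j, c j p) t x = ⨅ j, laxHopf U φ (c j) t x := by
  intro t x
  unfold laxHopf
  simp only [EReal.iInf_add_coe]
  refine le_antisymm (le_iInf fun j => ?_) ?_
  · exact le_iInf fun T => le_iInf fun hT => le_iInf fun u => le_iInf fun hu =>
      ((iInf_le _ T).trans ((iInf_le _ hT).trans ((iInf_le _ u).trans
        (iInf_le _ hu)))).trans (iInf_le _ j)
  · exact le_iInf fun T => le_iInf fun hT => le_iInf fun u => le_iInf fun hu =>
      le_iInf fun j => (iInf_le _ j).trans ((iInf_le _ T).trans ((iInf_le _ hT).trans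
        ((iInf_le _ u).trans (iInf_le _ hu))))
end

section
/- (Compatibility conditions) Let J be a finite nonempty index set, let c_j for j ∈ J be value conditions, and let c(t, x) = min_{j ∈ J} c_j(t, x). Assume the value conditions are mutually compatible, i.e. for every i ∈ J and every (t, x) ∈ Dom(c_i) one has c(t, x) = c_i(t, x). Then M_c(t, x) = c(t, x) for all (t, x) ∈ Dom(c) if and only if for all (i, j) ∈ J × J and all (t, x) ∈ Dom(c_i), M_{c_j}(t, x) ≥ c_i(t, x). -/
lemma laxHopf_le_term (U : Set ℝ) (φ : ℝ → ℝ) (c : ℝ × ℝ → EReal) (t x : ℝ)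
    {T u : ℝ} (hT : 0 ≤ T) (hu : u ∈ U) :
    laxHopf U φ c t x ≤ c (t - T, x + T * u) + ((T * φ u : ℝ) : EReal) :=
  iInf_le_of_le T (iInf_le_of_le hT (iInf_le_of_le u (iInf_le _ hu)))

lemma laxHopf_le_self (U : Set ℝ) (hU : U.Nonempty) (φ : ℝ → ℝ) (c : ℝ × ℝ → EReal)
    (t x : ℝ) : laxHopf U φ c t x ≤ c (t, x) := by
  obtain ⟨u, hu⟩ := hU
  refine (laxHopf_le_term U φ c t x le_rfl hu).trans_eq ?_
  norm_num

lemma laxHopf_mono (U : Set ℝ) (φ : ℝ → ℝ) {c c' : ℝ × ℝ → EReal}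
    (h : ∀ p, c p ≤ c' p) (t x : ℝ) : laxHopf U φ c t x ≤ laxHopf U φ c' t x := by
  refine le_iInf fun T => le_iInf fun hT => le_iInf fun u => le_iInf fun hu => ?_
  exact (laxHopf_le_term U φ c t x hT hu).trans (add_le_add (h _) le_rfl)

/-- **Compatibility conditions**: let `c` be the pointwise minimum of finitely many
mutually compatible value conditions `c_j` (i.e. `c = c_i` on `Dom(c_i)` for each `i`).
Then `M_c = c` on `Dom(c)` if and only if `M_{c_j}(t, x) ≥ c_i(t, x)` for all `(i, j)`
and all `(t, x) ∈ Dom(c_i)`. -/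
theorem laxHopf_compatibility (U : Set ℝ) (hU : U.Nonempty) (φ : ℝ → ℝ)
    (J : Type) [Fintype J] [Nonempty J]
    (c : J → ℝ × ℝ → EReal) (hc : ∀ (j : J) (p : ℝ × ℝ), c j p ≠ ⊥)
    (hcompat : ∀ (i : J) (p : ℝ × ℝ), c i p < ⊤ → (⨅ j, c j p) = c i p) :
    (∀ p : ℝ × ℝ, (⨅ j, c j p) < ⊤ →
        laxHopf U φ (fun q => ⨅ j, c j q) p.1 p.2 = ⨅ j, c j p) ↔
      (∀ (i j : J) (p : ℝ × ℝ), c i p < ⊤ → c i p ≤ laxHopf U φ (c j) p.1 p.2) := by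
  constructor
  · intro hMC i j p hi
    have hCp : (⨅ j, c j p) < ⊤ := lt_of_le_of_lt (iInf_le _ i) hi
    have h1 : laxHopf U φ (fun q => ⨅ j, c j q) p.1 p.2 = c i p := by
      rw [hMC p hCp, hcompat i p hi]
    calc c i p = laxHopf U φ (fun q => ⨅ j, c j q) p.1 p.2 := h1.symm
      _ ≤ laxHopf U φ (c j) p.1 p.2 :=
        laxHopf_mono U φ (fun q => iInf_le _ j) p.1 p.2
  · intro h p hp
    obtain ⟨i, hi⟩ := exists_eq_ciInf_of_finite (f := fun j => c j p)
    have hitop : c i p < ⊤ := hi ▸ hp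
    refine le_antisymm ?_ ?_
    · exact laxHopf_le_self U hU φ _ p.1 p.2
    · rw [← hi]
      refine le_iInf fun T => le_iInf fun hT => le_iInf fun u => le_iInf fun hu => ?_
      set q : ℝ × ℝ := (p.1 - T, p.2 + T * u) with hq
      obtain ⟨k, hk⟩ := exists_eq_ciInf_of_finite (f := fun j => c j q)
      calc c i p ≤ laxHopf U φ (c k) p.1 p.2 := h i k p hitop
        _ ≤ c k q + ((T * φ u : ℝ) : EReal) := laxHopf_le_term U φ (c k) p.1 p.2 hT hu
        _ = (⨅ j, c j q) + ((T * φ u : ℝ) : EReal) := by rw [hk]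
end

section
/- (Reduction of the Lax–Hopf infimum for boundary conditions) Fix x_b ∈ ℝ and suppose the value condition c satisfies c(t, x) = +∞ whenever x ≠ x_b. Then for every x > x_b and every t ∈ ℝ, M_c(t, x) = inf { c(t + (x − x_b)/u, x_b) − ((x − x_b)/u)·φ(u) : u ∈ U, u < 0 } (the infimum of the empty set being +∞). -/
/-- **Reduction of the Lax–Hopf infimum for boundary conditions**: if the value condition `c`
is `+∞` off the line `x = x_b`, then for every `x > x_b` and every `t`,
`M_c(t, x) = inf { c(t + (x − x_b)/u, x_b) − ((x − x_b)/u)·φ(u) : u ∈ U, u < 0 }`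
(the infimum of the empty set being `+∞`). -/
theorem laxHopf_boundary_reduction (U : Set ℝ) (hU : U.Nonempty) (φ : ℝ → ℝ) (xb : ℝ)
    (c : ℝ × ℝ → EReal) (hbot : ∀ p : ℝ × ℝ, c p ≠ ⊥)
    (hc : ∀ t x : ℝ, x ≠ xb → c (t, x) = ⊤) :
    ∀ x : ℝ, xb < x → ∀ t : ℝ,
      laxHopf U φ c t x =
        ⨅ (u : ℝ) (_ : u ∈ U) (_ : u < 0),
          c (t + (x - xb) / u, xb) + (((-((x - xb) / u * φ u)) : ℝ) : EReal) := by
  intro x hx t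
  unfold laxHopf
  apply le_antisymm
  · refine le_iInf fun u => le_iInf fun hu => le_iInf fun hu0 => ?_
    have hu' : u ≠ 0 := ne_of_lt hu0
    have hT : (0:ℝ) ≤ (xb - x)/u :=
      div_nonneg_iff.mpr (Or.inr ⟨by linarith, hu0.le⟩)
    refine iInf_le_of_le ((xb - x)/u)
      (iInf_le_of_le hT (iInf_le_of_le u (iInf_le_of_le hu (le_of_eq ?_))))
    have h1 : x + (xb - x)/u * u = xb := by field_simp; ring
    have h2 : t - (xb - x)/u = t + (x - xb)/u := by ring
    have h3 : (xb - x)/u * φ u = -((x - xb)/u * φ u) := by ring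
    rw [h1, h2, h3]
  · refine le_iInf fun T => le_iInf fun hT => le_iInf fun u => le_iInf fun hu => ?_
    by_cases h : x + T * u = xb
    · have hTu : T * u = xb - x := by linarith
      have hT0 : 0 < T := by
        rcases hT.lt_or_eq with h' | h'
        · exact h'
        · exfalso; rw [← h'] at hTu; simp at hTu; linarith
      have hu0 : u < 0 := by
        by_contra hcon
        push_neg at hcon
        nlinarith
      have hu' : u ≠ 0 := ne_of_lt hu0
      have hdiv : (x - xb)/u = -T := by
        field_simp
        linarith
      refine iInf_le_of_le u (iInf_le_of_le hu (iInf_le_of_le hu0 (le_of_eq ?_)))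
      rw [hdiv, h]
      have h2 : t + -T = t - T := by ring
      have h3 : -(-T * φ u) = T * φ u := by ring
      rw [h2, h3]
    · rw [hc _ _ h, EReal.top_add_of_ne_bot (EReal.coe_ne_bot _)]
      exact le_top
end

section
/- (Equivalence of the distributionally robust chance constraint and a second-order cone constraint) Let x ∈ ℝ^k and α ∈ (0, 1/2), and set κ_α = √((1 − α)/α). Then inf_{μ ∈ 𝒫} μ{ ξ ∈ ℝ^k : ⟨ξ, x⟩ ≤ 0 } ≥ 1 − α holds if and only if κ_α·√(⟨x, Γ x⟩) + ⟨d̂, x⟩ ≤ 0. -/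
open MeasureTheory

section DROAux

variable {k : ℕ} {ι : Type*} [Fintype ι]

noncomputable def dmeas (w : ι → ℝ) (q : ι → (Fin k → ℝ)) : Measure (Fin k → ℝ) :=
  ∑ i : ι, ENNReal.ofReal (w i) • Measure.dirac (q i)

lemma dmeas_isProb (w : ι → ℝ) (q : ι → (Fin k → ℝ)) (hw : ∀ i, 0 ≤ w i)
    (hsum : ∑ i, w i = 1) : IsProbabilityMeasure (dmeas w q) := by
  constructor
  rw [dmeas, Measure.finset_sum_apply]
  simp only [Measure.smul_apply, Measure.dirac_apply' _ MeasurableSet.univ,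
    Set.indicator_univ, Pi.one_apply, smul_eq_mul, mul_one]
  rw [← ENNReal.ofReal_sum_of_nonneg (fun i _ => hw i), hsum, ENNReal.ofReal_one]

lemma dmeas_integrable (w : ι → ℝ) (q : ι → (Fin k → ℝ)) {f : (Fin k → ℝ) → ℝ}
    (hf : Measurable f) : Integrable f (dmeas w q) := by
  rw [dmeas, integrable_finset_sum_measure]
  intro i _
  refine Integrable.smul_measure ?_ ENNReal.ofReal_ne_top
  have h : f =ᵐ[Measure.dirac (q i)] fun _ => f (q i) := by
    rw [ae_dirac_eq]; exact Filter.eventually_pure.2 rfl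
  exact (integrable_const (f (q i))).congr h.symm

lemma dmeas_integral (w : ι → ℝ) (q : ι → (Fin k → ℝ)) (hw : ∀ i, 0 ≤ w i)
    {f : (Fin k → ℝ) → ℝ} (hf : Measurable f) :
    ∫ ξ, f ξ ∂(dmeas w q) = ∑ i, w i * f (q i) := by
  rw [dmeas, integral_finset_sum_measure]
  · refine Finset.sum_congr rfl fun i _ => ?_
    rw [integral_smul_measure, integral_dirac, ENNReal.toReal_ofReal (hw i), smul_eq_mul]
  · intro i _
    refine Integrable.smul_measure ?_ ENNReal.ofReal_ne_top
    have h : f =ᵐ[Measure.dirac (q i)] fun _ => f (q i) := by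
      rw [ae_dirac_eq]; exact Filter.eventually_pure.2 rfl
    exact (integrable_const (f (q i))).congr h.symm

lemma dmeas_apply (w : ι → ℝ) (q : ι → (Fin k → ℝ)) {S : Set (Fin k → ℝ)}
    (hS : MeasurableSet S) :
    dmeas w q S = ∑ i, S.indicator (fun _ => ENNReal.ofReal (w i)) (q i) := by
  rw [dmeas, Measure.finset_sum_apply]
  refine Finset.sum_congr rfl fun i _ => ?_
  rw [Measure.smul_apply, Measure.dirac_apply' _ hS]
  by_cases h : q i ∈ S <;> simp [h, Set.indicator]


lemma cantelli {Ω : Type*} [MeasurableSpace Ω] (μ : Measure Ω) [IsProbabilityMeasure μ]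
    (Y : Ω → ℝ) (hY1 : Integrable Y μ) (hY2 : Integrable (fun ω => Y ω ^ 2) μ)
    (hmean : ∫ ω, Y ω ∂μ = 0) {v t : ℝ} (hvar : ∫ ω, Y ω ^ 2 ∂μ = v) (ht : 0 < t) :
    (μ {ω | t ≤ Y ω}).toReal ≤ v / (v + t ^ 2) := by
  have hv : 0 ≤ v := hvar ▸ integral_nonneg fun ω => sq_nonneg _
  set u : ℝ := v / t with hu
  have hu0 : 0 ≤ u := div_nonneg hv ht.le
  have htu : 0 < t + u := by positivity
  -- f = (Y + u)^2
  have hf_int : Integrable (fun ω => (Y ω + u) ^ 2) μ := by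
    have : (fun ω => (Y ω + u) ^ 2) = fun ω => Y ω ^ 2 + (2 * u) * Y ω + u ^ 2 := by
      funext ω; ring
    rw [this]
    exact (hY2.add (hY1.const_mul _)).add (integrable_const _)
  have hf_integral : ∫ ω, (Y ω + u) ^ 2 ∂μ = v + u ^ 2 := by
    have e1 : ∫ ω, (Y ω + u) ^ 2 ∂μ = ∫ ω, (Y ω ^ 2 + (2 * u * Y ω + u ^ 2)) ∂μ := by
      congr 1; funext ω; ring
    have i1 : Integrable (fun ω => 2 * u * Y ω + u ^ 2) μ := by
      exact (hY1.const_mul (2 * u)).add (integrable_const (u ^ 2))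
    rw [e1, integral_add hY2 i1,
      integral_add (hY1.const_mul (2 * u)) (integrable_const (u ^ 2)),
      integral_const_mul, hmean, hvar]
    simp
  have hmarkov := mul_meas_ge_le_integral_of_nonneg
    (ae_of_all μ fun ω => sq_nonneg (Y ω + u)) hf_int ((t + u) ^ 2)
  rw [hf_integral] at hmarkov
  have hsub : {ω | t ≤ Y ω} ⊆ {ω | (t + u) ^ 2 ≤ (Y ω + u) ^ 2} := by
    intro ω hω
    have h1 : t + u ≤ Y ω + u := by simpa using hω
    exact sq_le_sq' (by nlinarith [Set.mem_setOf_eq ▸ hω]) h1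
  have hmono : (μ {ω | t ≤ Y ω}).toReal ≤ (μ {ω | (t + u) ^ 2 ≤ (Y ω + u) ^ 2}).toReal :=
    ENNReal.toReal_mono (measure_ne_top μ _) (measure_mono hsub)
  have key : (t + u) ^ 2 * (μ {ω | t ≤ Y ω}).toReal ≤ v + u ^ 2 := by
    calc (t + u) ^ 2 * (μ {ω | t ≤ Y ω}).toReal
        ≤ (t + u) ^ 2 * (μ {ω | (t + u) ^ 2 ≤ (Y ω + u) ^ 2}).toReal := by
          exact mul_le_mul_of_nonneg_left hmono (by positivity)
      _ ≤ v + u ^ 2 := hmarkov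
  -- now algebra: (v + u^2)/(t+u)^2 = v/(v+t^2) with u = v/t
  have hvt : 0 < v + t ^ 2 := by positivity
  have halg : (v + u ^ 2) / (t + u) ^ 2 = v / (v + t ^ 2) := by
    rw [hu]; field_simp; ring
  calc (μ {ω | t ≤ Y ω}).toReal ≤ (v + u ^ 2) / (t + u) ^ 2 := by
        rw [le_div_iff₀ (by positivity : (0:ℝ) < (t + u) ^ 2), mul_comm]
        exact key
      _ = v / (v + t ^ 2) := halg

end DROAux

set_option maxHeartbeats 4000000 in
/-- **Equivalence of the distributionally robust chance constraint and a second-order cone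
constraint**: with `κ_α = √((1 − α)/α)` and `α ∈ (0, 1/2)`, the worst-case probability bound
`inf_{μ ∈ 𝒫} μ{ξ : ⟨ξ, x⟩ ≤ 0} ≥ 1 − α` over all probability measures `μ` with mean `d̂`
and covariance matrix `Γ` holds if and only if `κ_α·√(⟨x, Γx⟩) + ⟨d̂, x⟩ ≤ 0`. -/
theorem dro_chance_constraint_iff_soc (k : ℕ) (hk : 1 ≤ k) (dhat : Fin k → ℝ)
    (Γ : Matrix (Fin k) (Fin k) ℝ) (hΓ : Γ.PosSemidef)
    (x : Fin k → ℝ) (α : ℝ) (hα : α ∈ Set.Ioo (0 : ℝ) (1 / 2)) :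
    (∀ μ : Measure (Fin k → ℝ), IsProbabilityMeasure μ →
        (∀ i : Fin k, Integrable (fun ξ => ξ i) μ) →
        (∀ i j : Fin k, Integrable (fun ξ => ξ i * ξ j) μ) →
        (∀ i : Fin k, (∫ ξ, ξ i ∂μ) = dhat i) →
        (∀ i j : Fin k, (∫ ξ, (ξ i - dhat i) * (ξ j - dhat j) ∂μ) = Γ i j) →
        ENNReal.ofReal (1 - α) ≤ μ {ξ : Fin k → ℝ | (∑ i, ξ i * x i) ≤ 0}) ↔
      Real.sqrt ((1 - α) / α) * Real.sqrt (∑ i, ∑ j, x i * Γ i j * x j)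
          + (∑ i, dhat i * x i) ≤ 0 := by
  obtain ⟨hα0, hα2⟩ := hα
  have hα1 : α < 1 := by linarith
  set m : ℝ := ∑ i, dhat i * x i with hm_def
  set Q : ℝ := ∑ i, ∑ j, x i * Γ i j * x j with hQ_def
  set κ : ℝ := Real.sqrt ((1 - α) / α) with hκ_def
  set σ : ℝ := Real.sqrt Q with hσ_def
  have hQ0 : 0 ≤ Q := by
    have := hΓ.dotProduct_mulVec_nonneg x
    simpa [dotProduct, Matrix.mulVec, hQ_def, Finset.mul_sum, mul_assoc]
      using this
  have hσ0 : 0 ≤ σ := Real.sqrt_nonneg _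
  have hσ2 : σ ^ 2 = Q := Real.sq_sqrt hQ0
  have hκ0 : 0 < κ := Real.sqrt_pos.2 (div_pos (by linarith) hα0)
  have hκ2 : κ ^ 2 = (1 - α) / α := Real.sq_sqrt (le_of_lt (div_pos (by linarith) hα0))
  clear_value m Q κ σ
  have hYm : Measurable (fun ξ : Fin k → ℝ => ∑ i, ξ i * x i) :=
    Finset.measurable_sum _ fun i _ => (measurable_pi_apply i).mul_const _
  have hSm : MeasurableSet {ξ : Fin k → ℝ | (∑ i, ξ i * x i) ≤ 0} :=
    measurableSet_le hYm measurable_const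
  constructor
  · -- forward: worst-case bound implies SOC constraint
    intro H
    by_contra hcon
    push_neg at hcon
    -- symmetric square root of Γ
    obtain ⟨S, hSsym, hSS⟩ : ∃ S : Matrix (Fin k) (Fin k) ℝ,
        (∀ i j, S i j = S j i) ∧ (∀ i j, (∑ r, S i r * S j r) = Γ i j) := by
      open MatrixOrder in
      have hS0 : (CFC.sqrt Γ).PosSemidef :=
        Matrix.nonneg_iff_posSemidef.mp (CFC.sqrt_nonneg Γ)
      open MatrixOrder in
      have hsym : ∀ i j, CFC.sqrt Γ i j = CFC.sqrt Γ j i := by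
        intro i j
        have h := hS0.1
        conv_lhs => rw [← h]
        simp [Matrix.conjTranspose_apply]
      refine ⟨CFC.sqrt Γ, hsym, ?_⟩
      intro i j
      open MatrixOrder in
      have h : CFC.sqrt Γ * CFC.sqrt Γ = Γ := by
        have := CFC.sq_sqrt Γ (Matrix.nonneg_iff_posSemidef.mpr hΓ); rwa [pow_two] at this
      have h2 : (CFC.sqrt Γ * CFC.sqrt Γ) i j = Γ i j := by rw [h]
      rw [← h2, Matrix.mul_apply]
      exact Finset.sum_congr rfl fun r _ => by rw [hsym r j]
    set u : Fin k → ℝ := fun r => ∑ j, S r j * x j with hu_def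
    set g : Fin k → ℝ := fun i => ∑ j, Γ i j * x j with hg_def
    have hSu : ∀ i, ∑ r, S i r * u r = g i := by
      intro i
      calc ∑ r, S i r * u r = ∑ r, ∑ j, S i r * (S r j * x j) := by
            refine Finset.sum_congr rfl fun r _ => ?_
            rw [hu_def, Finset.mul_sum]
        _ = ∑ j, ∑ r, S i r * (S r j * x j) := Finset.sum_comm
        _ = ∑ j, (∑ r, S i r * S j r) * x j := by
            refine Finset.sum_congr rfl fun j _ => ?_
            rw [Finset.sum_mul]
            exact Finset.sum_congr rfl fun r _ => by rw [hSsym r j]; ring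
        _ = g i := by
            rw [hg_def]
            exact Finset.sum_congr rfl fun j _ => by rw [hSS i j]
    have hxS : ∀ r, ∑ i, x i * S i r = u r := by
      intro r
      rw [hu_def]
      exact Finset.sum_congr rfl fun i _ => by rw [hSsym i r]; ring
    have hgx : ∑ i, g i * x i = Q := by
      rw [hQ_def, hg_def]
      refine Finset.sum_congr rfl fun i _ => ?_
      rw [Finset.sum_mul]
      exact Finset.sum_congr rfl fun j _ => by ring
    have huu : ∑ r, u r * u r = Q := by
      calc ∑ r, u r * u r = ∑ r, ∑ j, (S r j * x j) * u r := by
            refine Finset.sum_congr rfl fun r _ => ?_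
            conv_lhs => rw [hu_def]
            rw [Finset.sum_mul]
        _ = ∑ j, ∑ r, (S r j * x j) * u r := Finset.sum_comm
        _ = ∑ j, x j * ∑ r, S j r * u r := by
            refine Finset.sum_congr rfl fun j _ => ?_
            rw [Finset.mul_sum]
            exact Finset.sum_congr rfl fun r _ => by rw [hSsym r j]; ring
        _ = ∑ j, g j * x j := by
            refine Finset.sum_congr rfl fun j _ => ?_
            rw [hSu j]; ring
        _ = Q := hgx
    set c : ℝ := Real.sqrt (k : ℝ) with hc_def
    have hc2 : c ^ 2 = (k : ℝ) := Real.sq_sqrt (Nat.cast_nonneg k)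
    have hkR : (0 : ℝ) < (k : ℝ) := by exact_mod_cast hk
    have hc0 : 0 < c := Real.sqrt_pos.2 hkR
    rcases eq_or_lt_of_le hQ0 with hQz | hQpos
    · -- Q = 0 : then m > 0 and all u r = 0
      have hσz : σ = 0 := by rw [hσ_def, ← hQz, Real.sqrt_zero]
      have hm_pos : 0 < m := by rw [hσz] at hcon; linarith
      have hu0 : ∀ r, u r = 0 := by
        intro r
        have h0 : ∑ r, u r * u r = 0 := by rw [huu, ← hQz]
        have := (Finset.sum_eq_zero_iff_of_nonneg
          (fun r _ => mul_self_nonneg (u r))).1 h0 r (Finset.mem_univ r)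
        exact mul_self_eq_zero.1 this
      set wA : Fin k × Bool → ℝ := fun _ => 1 / (2 * c ^ 2) with hwA_def
      set qA : Fin k × Bool → (Fin k → ℝ) :=
        fun p i => dhat i + (if p.2 then (1:ℝ) else -1) * (c * S i p.1) with hqA_def
      have hwA : ∀ p, 0 ≤ wA p := fun p => by simp only [hwA_def]; positivity
      have hprob : IsProbabilityMeasure (dmeas wA qA) := by
        refine dmeas_isProb _ _ hwA ?_
        simp only [hwA_def]
        rw [Finset.sum_const, Finset.card_univ, Fintype.card_prod, Fintype.card_fin,
          Fintype.card_bool, nsmul_eq_mul]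
        push_cast
        rw [← hc2]
        field_simp
      have hint1 : ∀ i : Fin k, Integrable (fun ξ : Fin k → ℝ => ξ i) (dmeas wA qA) :=
        fun i => dmeas_integrable _ _ (measurable_pi_apply i)
      have hint2 : ∀ i j : Fin k,
          Integrable (fun ξ : Fin k → ℝ => ξ i * ξ j) (dmeas wA qA) :=
        fun i j => dmeas_integrable _ _ ((measurable_pi_apply i).mul (measurable_pi_apply j))
      have hmean : ∀ i : Fin k, ∫ ξ, ξ i ∂(dmeas wA qA) = dhat i := by
        intro i
        rw [dmeas_integral _ _ hwA (measurable_pi_apply i)]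
        calc ∑ p : Fin k × Bool, wA p * qA p i
            = ∑ r : Fin k, dhat i / c ^ 2 := by
              rw [Fintype.sum_prod_type]
              refine Finset.sum_congr rfl fun r _ => ?_
              rw [Fintype.sum_bool]
              simp only [hwA_def, hqA_def, if_true, Bool.false_eq_true, if_false]
              field_simp
              ring
          _ = dhat i := by
              rw [Finset.sum_const, Finset.card_univ, Fintype.card_fin, nsmul_eq_mul, ← hc2]
              field_simp
      have hcov : ∀ i j : Fin k,
          ∫ ξ, (ξ i - dhat i) * (ξ j - dhat j) ∂(dmeas wA qA) = Γ i j := by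
        intro i j
        rw [dmeas_integral _ _ hwA (f := fun ξ : Fin k → ℝ => (ξ i - dhat i) * (ξ j - dhat j))
          (((measurable_pi_apply i).sub_const _).mul ((measurable_pi_apply j).sub_const _))]
        calc ∑ p : Fin k × Bool, wA p * ((qA p i - dhat i) * (qA p j - dhat j))
            = ∑ r : Fin k, S i r * S j r := by
              rw [Fintype.sum_prod_type]
              refine Finset.sum_congr rfl fun r _ => ?_
              rw [Fintype.sum_bool]
              simp only [hwA_def, hqA_def, if_true, Bool.false_eq_true, if_false]
              field_simp
              ring
          _ = Γ i j := hSS i j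
      have hpt : ∀ p : Fin k × Bool, ∑ i, qA p i * x i = m := by
        intro p
        calc ∑ i, qA p i * x i
            = ∑ i, (dhat i * x i + ((if p.2 then (1:ℝ) else -1) * c) * (x i * S i p.1)) := by
              refine Finset.sum_congr rfl fun i _ => ?_
              simp only [hqA_def]; ring
          _ = m := by
              rw [Finset.sum_add_distrib, ← Finset.mul_sum, hxS, hu0, ← hm_def]
              ring
      have hzero : dmeas wA qA {ξ : Fin k → ℝ | (∑ i, ξ i * x i) ≤ 0} = 0 := by
        rw [dmeas_apply _ _ hSm]
        refine Finset.sum_eq_zero fun p _ => ?_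
        refine Set.indicator_of_notMem ?_ _
        simp only [Set.mem_setOf_eq, not_le, hpt p]
        exact hm_pos
      have hb := H (dmeas wA qA) hprob hint1 hint2 hmean hcov
      rw [hzero] at hb
      exact (ENNReal.ofReal_pos.2 (by linarith : (0:ℝ) < 1 - α)).ne' (le_zero_iff.1 hb)
    · -- Q > 0
      have hσpos : 0 < σ := by rw [hσ_def]; exact Real.sqrt_pos.2 hQpos
      have hgxσ : ∑ i, g i * x i = σ ^ 2 := hgx.trans hσ2.symm
      have huuσ : ∑ r, u r * u r = σ ^ 2 := huu.trans hσ2.symm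
      set t : ℝ := -m / σ with ht_def
      have htκ : t < κ := by
        rw [ht_def, div_lt_iff₀ hσpos]
        linarith
      set s : ℝ := (max t 0 + κ) / 2 with hs_def
      have hmax : max t 0 < κ := max_lt htκ hκ0
      have hs0 : 0 < s := by
        have h := le_max_right t 0
        rw [hs_def]; linarith
      have hsκ : s < κ := by rw [hs_def]; linarith
      have hst : t < s := by
        have h := le_max_left t 0
        rw [hs_def]; linarith
      have hsm : 0 < s * σ + m := by
        have h1 : t * σ = -m := by rw [ht_def]; field_simp
        nlinarith [mul_lt_mul_of_pos_right hst hσpos]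
      have hs2κ : s ^ 2 < (1 - α) / α := by
        rw [← hκ2]
        nlinarith
      have h1s : (0:ℝ) < 1 + s ^ 2 := by positivity
      set p : Bool → ℝ := fun z => if z then 1 / (1 + s ^ 2) else s ^ 2 / (1 + s ^ 2)
        with hp_def
      set a : Bool → ℝ := fun z => if z then s else -1 / s with ha_def
      set wB : Fin k × Bool × Bool → ℝ := fun y => p y.2.1 * (1 / (2 * c ^ 2)) with hwB_def
      set qB : Fin k × Bool × Bool → (Fin k → ℝ) := fun y i =>
        dhat i + (a y.2.1 / σ) * g i
          + ((if y.2.2 then (1:ℝ) else -1) * c) * (S i y.1 - g i * u y.1 / σ ^ 2)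
        with hqB_def
      have hwB : ∀ y, 0 ≤ wB y := by
        intro y
        simp only [hwB_def, hp_def]
        cases y.2.1 <;> positivity
      have hprob : IsProbabilityMeasure (dmeas wB qB) := by
        refine dmeas_isProb _ _ hwB ?_
        calc ∑ y : Fin k × Bool × Bool, wB y = ∑ _r : Fin k, 1 / c ^ 2 := by
              simp only [Fintype.sum_prod_type]
              refine Finset.sum_congr rfl fun r _ => ?_
              simp only [Fintype.sum_bool, hwB_def, hp_def, if_true, Bool.false_eq_true, if_false]
              field_simp
              ring
          _ = 1 := by
              rw [Finset.sum_const, Finset.card_univ, Fintype.card_fin, nsmul_eq_mul, ← hc2]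
              field_simp
      have hint1 : ∀ i : Fin k, Integrable (fun ξ : Fin k → ℝ => ξ i) (dmeas wB qB) :=
        fun i => dmeas_integrable _ _ (measurable_pi_apply i)
      have hint2 : ∀ i j : Fin k,
          Integrable (fun ξ : Fin k → ℝ => ξ i * ξ j) (dmeas wB qB) :=
        fun i j => dmeas_integrable _ _ ((measurable_pi_apply i).mul (measurable_pi_apply j))
      have hmean : ∀ i : Fin k, ∫ ξ, ξ i ∂(dmeas wB qB) = dhat i := by
        intro i
        rw [dmeas_integral _ _ hwB (measurable_pi_apply i)]
        calc ∑ y : Fin k × Bool × Bool, wB y * qB y i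
            = ∑ _r : Fin k, dhat i / c ^ 2 := by
              simp only [Fintype.sum_prod_type]
              refine Finset.sum_congr rfl fun r _ => ?_
              simp only [Fintype.sum_bool, hwB_def, hqB_def, hp_def, ha_def, if_true, Bool.false_eq_true, if_false]
              field_simp
              ring
          _ = dhat i := by
              rw [Finset.sum_const, Finset.card_univ, Fintype.card_fin, nsmul_eq_mul, ← hc2]
              field_simp
      have hcov : ∀ i j : Fin k,
          ∫ ξ, (ξ i - dhat i) * (ξ j - dhat j) ∂(dmeas wB qB) = Γ i j := by
        intro i j
        rw [dmeas_integral _ _ hwB (f := fun ξ : Fin k → ℝ => (ξ i - dhat i) * (ξ j - dhat j))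
          (((measurable_pi_apply i).sub_const _).mul ((measurable_pi_apply j).sub_const _))]
        calc ∑ y : Fin k × Bool × Bool, wB y * ((qB y i - dhat i) * (qB y j - dhat j))
            = ∑ r : Fin k, (1 / c ^ 2 * (g i * g j / σ ^ 2)
                + (S i r * S j r
                  - (g j / σ ^ 2) * (S i r * u r) - (g i / σ ^ 2) * (S j r * u r)
                  + (g i * g j / σ ^ 4) * (u r * u r))) := by
              simp only [Fintype.sum_prod_type]
              refine Finset.sum_congr rfl fun r _ => ?_
              simp only [Fintype.sum_bool, hwB_def, hqB_def, hp_def, ha_def, if_true, Bool.false_eq_true, if_false]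
              field_simp
              ring
          _ = Γ i j := by
              rw [Finset.sum_add_distrib, Finset.sum_const, Finset.card_univ, Fintype.card_fin,
                nsmul_eq_mul]
              rw [Finset.sum_add_distrib, Finset.sum_sub_distrib, Finset.sum_sub_distrib,
                ← Finset.mul_sum, ← Finset.mul_sum, ← Finset.mul_sum,
                hSS i j, hSu i, hSu j, huuσ, ← hc2]
              field_simp
              ring
      have hY : ∀ y : Fin k × Bool × Bool, ∑ i, qB y i * x i = m + a y.2.1 * σ := by
        intro y
        have h2 : ∑ i, (a y.2.1 / σ) * (g i * x i) = (a y.2.1 / σ) * σ ^ 2 := by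
          rw [← Finset.mul_sum, hgxσ]
        have h3 : ∑ i, ((if y.2.2 then (1:ℝ) else -1) * c)
              * (x i * S i y.1 - u y.1 / σ ^ 2 * (g i * x i))
            = ((if y.2.2 then (1:ℝ) else -1) * c) * (u y.1 - u y.1 / σ ^ 2 * σ ^ 2) := by
          rw [← Finset.mul_sum]
          congr 1
          rw [Finset.sum_sub_distrib, hxS, ← Finset.mul_sum, hgxσ]
        calc ∑ i, qB y i * x i
            = ∑ i, (dhat i * x i + ((a y.2.1 / σ) * (g i * x i)
                + ((if y.2.2 then (1:ℝ) else -1) * c)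
                  * (x i * S i y.1 - u y.1 / σ ^ 2 * (g i * x i)))) := by
              refine Finset.sum_congr rfl fun i _ => ?_
              simp only [hqB_def]
              ring
          _ = m + ((a y.2.1 / σ) * σ ^ 2 + ((if y.2.2 then (1:ℝ) else -1) * c)
                * (u y.1 - u y.1 / σ ^ 2 * σ ^ 2)) := by
              rw [Finset.sum_add_distrib, Finset.sum_add_distrib, h2, h3, ← hm_def]
          _ = m + a y.2.1 * σ := by
              field_simp
              ring
      have hb := H (dmeas wB qB) hprob hint1 hint2 hmean hcov
      have hub : dmeas wB qB {ξ : Fin k → ℝ | (∑ i, ξ i * x i) ≤ 0}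
          ≤ ENNReal.ofReal (s ^ 2 / (1 + s ^ 2)) := by
        rw [dmeas_apply _ _ hSm]
        refine le_trans (Finset.sum_le_sum (fun y _ =>
          show ({ξ : Fin k → ℝ | (∑ i, ξ i * x i) ≤ 0}).indicator
              (fun _ => ENNReal.ofReal (wB y)) (qB y)
            ≤ (if y.2.1 then 0 else ENNReal.ofReal (s ^ 2 / (1 + s ^ 2) * (1 / (2 * c ^ 2))))
          from ?_)) ?_
        · rcases y with ⟨r, z, e⟩
          cases z
          · -- z = false
            refine le_trans (Set.indicator_le_self _ _ (qB (r, false, e))) ?_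
            have hwv : wB (r, false, e) = s ^ 2 / (1 + s ^ 2) * (1 / (2 * c ^ 2)) := by
              simp [hwB_def, hp_def]
            rw [hwv, if_neg (by simp)]
          · -- z = true : the point has positive Y value
            have hnot : qB (r, true, e) ∉ {ξ : Fin k → ℝ | (∑ i, ξ i * x i) ≤ 0} := by
              simp only [Set.mem_setOf_eq, not_le, hY (r, true, e)]
              simp only [ha_def, if_true]
              linarith [hsm]
            rw [Set.indicator_of_notMem hnot]
            exact zero_le'
        · -- evaluate the bounding sum
          have hval : (0:ℝ) ≤ s ^ 2 / (1 + s ^ 2) * (1 / (2 * c ^ 2)) := by positivity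
          refine le_of_eq ?_
          calc ∑ y : Fin k × Bool × Bool,
                (if y.2.1 then 0 else ENNReal.ofReal (s ^ 2 / (1 + s ^ 2) * (1 / (2 * c ^ 2))))
              = ∑ _r : Fin k, (ENNReal.ofReal (s ^ 2 / (1 + s ^ 2) * (1 / (2 * c ^ 2)))
                  + ENNReal.ofReal (s ^ 2 / (1 + s ^ 2) * (1 / (2 * c ^ 2)))) := by
                simp [Fintype.sum_prod_type, Fintype.sum_bool]
            _ = ENNReal.ofReal (s ^ 2 / (1 + s ^ 2)) := by
                rw [Finset.sum_const, Finset.card_univ, Fintype.card_fin, nsmul_eq_mul,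
                  ← ENNReal.ofReal_add hval hval, ← ENNReal.ofReal_natCast k,
                  ← ENNReal.ofReal_mul (Nat.cast_nonneg k)]
                congr 1
                rw [← hc2]
                field_simp
                ring
      have hstrict : ENNReal.ofReal (s ^ 2 / (1 + s ^ 2)) < ENNReal.ofReal (1 - α) := by
        rw [ENNReal.ofReal_lt_ofReal_iff (by linarith : (0:ℝ) < 1 - α)]
        rw [div_lt_iff₀ h1s]
        nlinarith [(lt_div_iff₀ hα0).1 hs2κ]
      exact absurd (hb.trans hub) hstrict.not_ge
  · -- reverse: SOC constraint implies worst-case bound (Cantelli)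
    intro hsoc μ hprob h1 h2 hmean hcov
    set Y : (Fin k → ℝ) → ℝ := fun ξ => ∑ i, ξ i * x i with hY_def
    have hm0 : m ≤ 0 := by nlinarith
    -- integrability and moments of Y
    have iY : Integrable Y μ := integrable_finset_sum _ fun i _ => (h1 i).mul_const (x i)
    have EY : ∫ ξ, Y ξ ∂μ = m := by
      rw [hY_def, hm_def, integral_finset_sum _ fun i _ => (h1 i).mul_const (x i)]
      exact Finset.sum_congr rfl fun i _ => by rw [integral_mul_const, hmean i]
    have hZeq : ∀ ξ : Fin k → ℝ, Y ξ - m = ∑ i, (ξ i - dhat i) * x i := by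
      intro ξ
      rw [hY_def, hm_def, ← Finset.sum_sub_distrib]
      exact Finset.sum_congr rfl fun i _ => by ring
    have hint_c : ∀ i j : Fin k,
        Integrable (fun ξ : Fin k → ℝ => (ξ i - dhat i) * (ξ j - dhat j)) μ := by
      intro i j
      have e : (fun ξ : Fin k → ℝ => (ξ i - dhat i) * (ξ j - dhat j))
          = fun ξ => ξ i * ξ j - dhat j * ξ i - dhat i * ξ j + dhat i * dhat j :=
        funext fun ξ => by ring
      rw [e]
      exact (((h2 i j).sub ((h1 i).const_mul _)).sub ((h1 j).const_mul _)).add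
        (integrable_const _)
    have eZ2 : (fun ξ : Fin k → ℝ => (Y ξ - m) ^ 2)
        = fun ξ => ∑ i, ∑ j, ((ξ i - dhat i) * (ξ j - dhat j)) * (x i * x j) := by
      funext ξ
      rw [hZeq ξ, pow_two, Finset.sum_mul_sum]
      exact Finset.sum_congr rfl fun i _ => Finset.sum_congr rfl fun j _ => by ring
    have iZ2 : Integrable (fun ξ : Fin k → ℝ => (Y ξ - m) ^ 2) μ := by
      rw [eZ2]
      exact integrable_finset_sum _ fun i _ =>
        integrable_finset_sum _ fun j _ => (hint_c i j).mul_const _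
    have EZ2 : ∫ ξ, (Y ξ - m) ^ 2 ∂μ = Q := by
      rw [eZ2, integral_finset_sum _ fun i _ =>
        integrable_finset_sum _ fun j _ => (hint_c i j).mul_const _]
      rw [hQ_def]
      refine Finset.sum_congr rfl fun i _ => ?_
      rw [integral_finset_sum _ fun j _ => (hint_c i j).mul_const _]
      refine Finset.sum_congr rfl fun j _ => ?_
      rw [integral_mul_const, hcov i j]; ring
    have iZ : Integrable (fun ξ : Fin k → ℝ => Y ξ - m) μ := iY.sub (integrable_const m)
    have EZ : ∫ ξ, (Y ξ - m) ∂μ = 0 := by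
      rw [integral_sub iY (integrable_const m), EY, integral_const, probReal_univ]
      simp
    rcases eq_or_lt_of_le hm0 with hm | hm
    · -- m = 0, so σ = 0, Q = 0, Y = 0 a.e.
      have hσz : σ = 0 := by nlinarith
      have hQz : Q = 0 := by rw [← hσ2, hσz]; ring
      have hY0 : (fun ξ : Fin k → ℝ => (Y ξ - m) ^ 2) =ᵐ[μ] 0 := by
        rw [← integral_eq_zero_iff_of_nonneg (fun ξ => sq_nonneg _) iZ2, EZ2, hQz]
      have hsub : ∀ᵐ ξ ∂μ, Y ξ ≤ 0 := by
        filter_upwards [hY0] with ξ hξ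
        have : (Y ξ - m) ^ 2 = 0 := hξ
        have : Y ξ = m := by nlinarith [sq_nonneg (Y ξ - m)]
        rw [this, ← hm]
      calc ENNReal.ofReal (1 - α) ≤ 1 := ENNReal.ofReal_le_one.2 (by linarith)
        _ = μ Set.univ := measure_univ.symm
        _ ≤ μ {ξ : Fin k → ℝ | (∑ i, ξ i * x i) ≤ 0} := by
            refine measure_mono_ae ?_
            filter_upwards [hsub] with ξ hξ _
            exact hξ
    · -- m < 0: Cantelli
      have hc := cantelli μ (fun ξ => Y ξ - m) iZ iZ2 EZ EZ2 (t := -m) (by linarith)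
      have hsub : {ξ : Fin k → ℝ | 0 < Y ξ} ⊆ {ξ | -m ≤ Y ξ - m} := by
        intro ξ hξ; simp only [Set.mem_setOf_eq] at *; linarith
      have hQm : 0 < Q + m ^ 2 := by nlinarith
      have hκσ : κ * σ ≤ -m := by linarith [hsoc]
      have hsq : (1 - α) / α * Q ≤ m ^ 2 := by
        have h2' : (κ * σ) ^ 2 ≤ (-m) ^ 2 := by
          apply sq_le_sq' _ hκσ
          nlinarith
        calc (1 - α) / α * Q = (κ * σ) ^ 2 := by rw [mul_pow, hκ2, hσ2]
          _ ≤ (-m) ^ 2 := h2'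
          _ = m ^ 2 := by ring
      have hfrac : Q / (Q + (-m) ^ 2) ≤ α := by
        rw [neg_sq, div_le_iff₀ hQm]
        have h1 := mul_le_mul_of_nonneg_right hsq hα0.le
        have he : (1 - α) / α * Q * α = (1 - α) * Q := by field_simp
        rw [he] at h1
        ring_nf at h1 ⊢
        linarith [h1]
      have hmeas2 : (μ {ξ : Fin k → ℝ | 0 < Y ξ}).toReal ≤ α := by
        refine le_trans ?_ (le_trans hc hfrac)
        exact ENNReal.toReal_mono (measure_ne_top μ _) (measure_mono hsub)
      have hle : μ {ξ : Fin k → ℝ | 0 < Y ξ} ≤ ENNReal.ofReal α :=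
        (ENNReal.le_ofReal_iff_toReal_le (measure_ne_top μ _) hα0.le).2 hmeas2
      have hcompl : {ξ : Fin k → ℝ | (∑ i, ξ i * x i) ≤ 0} = {ξ : Fin k → ℝ | 0 < Y ξ}ᶜ := by
        ext ξ; simp [hY_def, not_lt]
      have hS' : MeasurableSet {ξ : Fin k → ℝ | 0 < Y ξ} :=
        measurableSet_lt measurable_const hYm
      rw [hcompl, measure_compl hS' (measure_ne_top μ _), measure_univ]
      have hofr : ENNReal.ofReal (1 - α) = 1 - ENNReal.ofReal α := by
        rw [ENNReal.ofReal_sub _ hα0.le, ENNReal.ofReal_one]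
      rw [hofr]
      exact tsub_le_tsub_left hle 1
end
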